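/- A linearly dense sequence {g_n}_{n≥0} in a Hilbert space is a normalized tight (Parseval) frame if and only if its Gram matrix G = (⟨g_i, g_j⟩) defines an orthogonal projection operator on ℓ²(ℕ). -/

import Mathlib

open scoped ComplexInnerProductSpace
open ComplexConjugate

noncomputable section ParsevalAux

local notation "ℓ2" => lp (fun _ : ℕ => ℂ) 2

open ComplexConjugate

lemma aux_hasSum_norm_sq (f : ℓ2) : HasSum (fun n => ‖f n‖ ^ 2) (‖f‖ ^ 2) := by
  have h := lp.hasSum_norm (p := 2) (E := fun _ : ℕ => ℂ) (by norm_num) f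
  simpa [Real.rpow_natCast] using h

lemma aux_inner_single_one (n : ℕ) (f : ℓ2) : ⟪lp.single 2 n (1 : ℂ), f⟫ = f n := by
  rw [lp.inner_single_left]
  simp [RCLike.inner_apply]

lemma aux_star_single_one (n : ℕ) :
    star (lp.single 2 n (1 : ℂ) : ℓ2) = lp.single 2 n (1 : ℂ) := by
  refine lp.ext (funext fun m => ?_)
  rcases eq_or_ne m n with h | h
  · subst h; simp [lp.single_apply_self]
  · simp [lp.single_apply_ne 2 n _ h, Pi.single_apply, h]

lemma aux_inner_star_star (f h : ℓ2) : ⟪star f, star h⟫ = conj ⟪f, h⟫ := by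
  have h2 := lp.hasSum_inner (𝕜 := ℂ) (star f) (star h)
  refine h2.unique ?_
  have h1 := (lp.hasSum_inner (𝕜 := ℂ) f h).star
  have h3 : (fun n => ⟪(star f) n, (star h) n⟫) = fun n => star ⟪f n, h n⟫ := by
    funext n
    simp [RCLike.inner_apply, mul_comm]
  rw [h3]
  exact h1

lemma aux_inner_star_left (a b : ℓ2) : ⟪star a, b⟫ = conj ⟪a, star b⟫ := by
  conv_lhs => rw [← star_star b]
  exact aux_inner_star_star a (star b)

lemma aux_inner_star_right (a b : ℓ2) : ⟪a, star b⟫ = conj ⟪star a, b⟫ := by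
  rw [aux_inner_star_left, Complex.conj_conj]

variable {H : Type*} [NormedAddCommGroup H] [InnerProductSpace ℂ H] [CompleteSpace H]

/-- The analysis operator, as a linear isometry, for a Parseval frame. -/
def analysisIsom (g : ℕ → H)
    (hP : ∀ x : H, HasSum (fun n => ‖⟪g n, x⟫‖ ^ 2) (‖x‖ ^ 2)) : H →ₗᵢ[ℂ] ℓ2 where
  toFun x := ⟨fun n => ⟪g n, x⟫, memℓp_gen (by
    simpa [Real.rpow_natCast] using (hP x).summable)⟩
  map_add' x y := lp.ext (funext fun n => by
    simp [lp.coeFn_add, inner_add_right]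
    rfl)
  map_smul' c x := lp.ext (funext fun n => by
    simp [lp.coeFn_smul, inner_smul_right])
  norm_map' x := by
    have h1 := aux_hasSum_norm_sq ⟨fun n => ⟪g n, x⟫, memℓp_gen (by
      simpa [Real.rpow_natCast] using (hP x).summable)⟩
    have h2 := (hP x).unique h1
    have h3 := congrArg Real.sqrt h2
    rw [Real.sqrt_sq (norm_nonneg _), Real.sqrt_sq (norm_nonneg _)] at h3
    exact h3.symm

end ParsevalAux

theorem parseval_frame_iff_gram_projection
    {H : Type*} [NormedAddCommGroup H] [InnerProductSpace ℂ H] [CompleteSpace H]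
    (g : ℕ → H)
    (hdense : (Submodule.span ℂ (Set.range g)).topologicalClosure = ⊤) :
    (∀ x : H, HasSum (fun n => ‖⟪g n, x⟫‖ ^ 2) (‖x‖ ^ 2)) ↔
      ∃ T : lp (fun _ : ℕ => ℂ) 2 →L[ℂ] lp (fun _ : ℕ => ℂ) 2,
        IsSelfAdjoint T ∧ T.comp T = T ∧
        ∀ i j : ℕ, ⟪lp.single 2 i (1 : ℂ), T (lp.single 2 j (1 : ℂ))⟫ = ⟪g j, g i⟫ := by
  constructor
  · intro hP
    set A := analysisIsom g hP with hA
    set Acl := A.toContinuousLinearMap with hAcl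
    set As := ContinuousLinearMap.adjoint Acl with hAs
    have hAs_single : ∀ j : ℕ, As (lp.single 2 j (1 : ℂ)) = g j := by
      intro j
      refine ext_inner_right ℂ fun x => ?_
      rw [hAs, ContinuousLinearMap.adjoint_inner_left, aux_inner_single_one]
      rfl
    have hAsA : ∀ x : H, As (Acl x) = x := by
      intro x
      refine ext_inner_right ℂ fun y => ?_
      rw [hAs, ContinuousLinearMap.adjoint_inner_left]
      exact A.inner_map_map x y
    set T0 := Acl.comp As with hT0
    have hT0sym : ∀ u v : lp (fun _ : ℕ => ℂ) 2, ⟪T0 u, v⟫ = ⟪u, T0 v⟫ := by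
      intro u v
      have h1 : ⟪As u, As v⟫ = ⟪Acl (As u), v⟫ :=
        ContinuousLinearMap.adjoint_inner_right Acl (As u) v
      have h2 : ⟪As u, As v⟫ = ⟪u, Acl (As v)⟫ :=
        ContinuousLinearMap.adjoint_inner_left Acl (As v) u
      rw [hT0]
      simp only [ContinuousLinearMap.comp_apply]
      rw [← h1, h2]
    set Tlin : lp (fun _ : ℕ => ℂ) 2 →ₗ[ℂ] lp (fun _ : ℕ => ℂ) 2 :=
      { toFun := fun f => star (T0 (star f))
        map_add' := fun f h => by simp [star_add, map_add]
        map_smul' := fun c f => by simp [star_smul, map_smul, star_star] } with hTlin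
    have hTcont : Continuous Tlin := by
      show Continuous fun f => star (T0 (star f))
      exact continuous_star.comp (T0.continuous.comp continuous_star)
    refine ⟨⟨Tlin, hTcont⟩, ?_, ?_, ?_⟩
    · rw [ContinuousLinearMap.isSelfAdjoint_iff_isSymmetric]
      intro x y
      show ⟪star (T0 (star x)), y⟫ = ⟪x, star (T0 (star y))⟫
      rw [aux_inner_star_left, hT0sym, aux_inner_star_left]
      simp
    · refine ContinuousLinearMap.ext fun f => ?_
      show star (T0 (star (star (T0 (star f))))) = star (T0 (star f))
      rw [star_star]
      congr 1
      rw [hT0]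
      simp only [ContinuousLinearMap.comp_apply]
      rw [hAsA]
    · intro i j
      show ⟪lp.single 2 i (1 : ℂ), star (T0 (star (lp.single 2 j (1 : ℂ))))⟫ = ⟪g j, g i⟫
      rw [aux_star_single_one, aux_inner_star_right, aux_star_single_one]
      have h1 : T0 (lp.single 2 j (1 : ℂ)) = Acl (g j) := by
        rw [hT0]; simp only [ContinuousLinearMap.comp_apply]; rw [hAs_single]
      rw [h1, aux_inner_single_one]
      have h2 : (Acl (g j) : ∀ _ : ℕ, ℂ) i = ⟪g i, g j⟫ := rfl
      rw [h2, inner_conj_symm]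
  · rintro ⟨T, hsa, hidem, hgram⟩ x
    have hTsym := hsa.isSymmetric
    have hTsym' : ∀ a b : lp (fun _ : ℕ => ℂ) 2, ⟪T a, b⟫ = ⟪a, T b⟫ := fun a b => hTsym a b
    -- Parseval identity on the span
    have hspan : ∀ y ∈ Submodule.span ℂ (Set.range g),
        HasSum (fun n => ‖⟪g n, y⟫‖ ^ 2) (‖y‖ ^ 2) := by
      intro y hy
      obtain ⟨c, rfl⟩ := Finsupp.mem_span_range_iff_exists_finsupp.1 hy
      set s := c.support with hs
      have hy' : (c.sum fun i a => a • g i) = ∑ i ∈ s, c i • g i := rfl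
      rw [hy']
      set y := ∑ i ∈ s, c i • g i with hydef
      set u : lp (fun _ : ℕ => ℂ) 2 :=
        ∑ i ∈ s, conj (c i) • lp.single 2 i (1 : ℂ) with hu
      have hTu : ∀ n : ℕ, (T u) n = conj ⟪g n, y⟫ := by
        intro n
        rw [← aux_inner_single_one n (T u)]
        rw [hu, map_sum]
        rw [inner_sum]
        have h1 : ∀ i ∈ s, ⟪lp.single 2 n (1 : ℂ), T (conj (c i) • lp.single 2 i (1 : ℂ))⟫
            = conj (c i) * ⟪g i, g n⟫ := by
          intro i _
          rw [map_smul, inner_smul_right, hgram n i]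
        rw [Finset.sum_congr rfl h1]
        rw [hydef, inner_sum, map_sum]
        refine Finset.sum_congr rfl fun i _ => ?_
        rw [inner_smul_right, map_mul, inner_conj_symm]
      have hBu : ⟪u, T u⟫ = ⟪y, y⟫ := by
        rw [hu, sum_inner]
        have h1 : ∀ i ∈ s, ⟪conj (c i) • lp.single 2 i (1 : ℂ), T u⟫
            = c i * conj ⟪g i, y⟫ := by
          intro i _
          rw [inner_smul_left, aux_inner_single_one, hTu i]
          simp only [starRingEnd_apply, star_star]
        rw [Finset.sum_congr rfl h1]
        conv_rhs => rw [hydef]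
        rw [inner_sum]
        refine (Finset.sum_congr rfl fun i _ => ?_).symm
        rw [inner_smul_right, inner_conj_symm]
      have hCu : ⟪(T u : lp (fun _ : ℕ => ℂ) 2), T u⟫ = ⟪y, y⟫ := by
        rw [hTsym' u (T u)]
        have h2 : T (T u) = T u := by
          have := congrArg (fun S : lp (fun _ : ℕ => ℂ) 2 →L[ℂ] lp (fun _ : ℕ => ℂ) 2 => S u) hidem
          simpa using this
        rw [h2]
        exact hBu
      have hnorm : ‖(T u : lp (fun _ : ℕ => ℂ) 2)‖ ^ 2 = ‖y‖ ^ 2 := by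
        have h3 : RCLike.re ⟪(T u : lp (fun _ : ℕ => ℂ) 2), T u⟫ = RCLike.re (⟪y, y⟫ : ℂ) := by
          rw [hCu]
        rwa [inner_self_eq_norm_sq, inner_self_eq_norm_sq] at h3
      have h4 := aux_hasSum_norm_sq (T u)
      rw [hnorm] at h4
      have h5 : (fun n => ‖(T u) n‖ ^ 2) = fun n => ‖⟪g n, y⟫‖ ^ 2 := by
        funext n
        rw [hTu n, RCLike.norm_conj]
      rwa [h5] at h4
    -- density
    have hdense' : Dense (Submodule.span ℂ (Set.range g) : Set H) := by
      rw [dense_iff_closure_eq, ← Submodule.topologicalClosure_coe, hdense]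
      rfl
    -- Bessel inequality everywhere
    have hbessel : ∀ (z : H) (sf : Finset ℕ), ∑ n ∈ sf, ‖⟪g n, z⟫‖ ^ 2 ≤ ‖z‖ ^ 2 := by
      intro z sf
      have hcl : IsClosed {w : H | ∑ n ∈ sf, ‖⟪g n, w⟫‖ ^ 2 ≤ ‖w‖ ^ 2} := by
        apply isClosed_le
        · exact continuous_finset_sum _ fun n _ =>
            ((innerSL ℂ (g n)).continuous.norm.pow 2)
        · exact continuous_norm.pow 2
      have hsub : (Submodule.span ℂ (Set.range g) : Set H)
          ⊆ {w : H | ∑ n ∈ sf, ‖⟪g n, w⟫‖ ^ 2 ≤ ‖w‖ ^ 2} := by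
        intro w hw
        exact sum_le_hasSum sf (fun n _ => sq_nonneg _) (hspan w hw)
      have := hcl.closure_subset_iff.2 hsub
      exact this (by rw [hdense'.closure_eq]; trivial) 
    -- the analysis operator, globally
    have hmem : ∀ z : H, Memℓp (fun n => ⟪g n, z⟫) 2 := by
      intro z
      refine memℓp_gen' (C := ‖z‖ ^ 2) fun sf => ?_
      simpa [Real.rpow_natCast] using hbessel z sf
    set Alin : H →ₗ[ℂ] lp (fun _ : ℕ => ℂ) 2 :=
      { toFun := fun z => ⟨fun n => ⟪g n, z⟫, hmem z⟩
        map_add' := fun z w => lp.ext (funext fun n => by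
          simp [lp.coeFn_add, inner_add_right]
          rfl)
        map_smul' := fun c z => lp.ext (funext fun n => by
          simp [lp.coeFn_smul, inner_smul_right]) } with hAlin
    have hAbound : ∀ z : H, ‖Alin z‖ ≤ 1 * ‖z‖ := by
      intro z
      rw [one_mul]
      refine lp.norm_le_of_forall_sum_le (by norm_num) (norm_nonneg z) fun sf => ?_
      have h0 : ∀ i : ℕ, (Alin z : ∀ _ : ℕ, ℂ) i = ⟪g i, z⟫ := fun _ => rfl
      have : ∑ i ∈ sf, ‖(Alin z) i‖ ^ ((2 : ENNReal).toReal) = ∑ n ∈ sf, ‖⟪g n, z⟫‖ ^ 2 := by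
        refine Finset.sum_congr rfl fun i _ => ?_
        rw [h0]
        simp [Real.rpow_natCast]
      rw [this]
      have h2 : ‖z‖ ^ ((2 : ENNReal).toReal) = ‖z‖ ^ 2 := by
        simp [Real.rpow_natCast]
      rw [h2]
      exact hbessel z sf
    set Acl := Alin.mkContinuous 1 hAbound with hAcl
    have hiso : ∀ z : H, ‖Acl z‖ = ‖z‖ := by
      have hcont1 : Continuous fun z : H => ‖Acl z‖ := Acl.continuous.norm
      have heq : Set.EqOn (fun z : H => ‖Acl z‖) (fun z : H => ‖z‖)
          (Submodule.span ℂ (Set.range g) : Set H) := by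
        intro z hz
        have h1 := aux_hasSum_norm_sq (Acl z)
        have h2 : (fun n => ‖(Acl z) n‖ ^ 2) = fun n => ‖⟪g n, z⟫‖ ^ 2 := rfl
        rw [h2] at h1
        have h3 := h1.unique (hspan z hz)
        have h4 := congrArg Real.sqrt h3
        rwa [Real.sqrt_sq (norm_nonneg _), Real.sqrt_sq (norm_nonneg _)] at h4
      have := Continuous.ext_on hdense' hcont1 continuous_norm heq
      exact fun z => congrFun this z
    have h1 := aux_hasSum_norm_sq (Acl x)
    have h2 : (fun n => ‖(Acl x) n‖ ^ 2) = fun n => ‖⟪g n, x⟫‖ ^ 2 := rfl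
    rw [h2, hiso x] at h1
    exact h1
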